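/- With η_f := max_x P(S=1|X_f=x) attained at some point x*, the decision variable Ŷ_f^{DI} with P(Ŷ_f^{DI}=1|X_f=x) = γ·1[P(S=1|X_f=x)=η_f] (for a constant γ ∈ (0,1]) achieves DI(Ŷ_f^{DI},S) = 1 − [P(S=1)(1−η_f)] / [P(S=0)·η_f], i.e., the upper bound on normalized disparate impact is tight. -/

import Mathlib

open Finset Classical Real

open Classical in
/-- Probability of event `E` under weight function `p` on a finite sample space. -/
noncomputable def Pr {Ω : Type*} [Fintype Ω] (p : Ω → ℝ) (E : Ω → Prop) : ℝ :=
  ∑ ω, if E ω then p ω else 0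

/-- Conditional probability `P(A | B)`. -/
noncomputable def cPr {Ω : Type*} [Fintype Ω] (p : Ω → ℝ) (A B : Ω → Prop) : ℝ :=
  Pr p (fun ω => A ω ∧ B ω) / Pr p B

/-- Statistical parity `SP(Ŷ,S) = P(Ŷ=1|S=1) - P(Ŷ=1|S=0)`. -/
noncomputable def SP {Ω : Type*} [Fintype Ω] (p : Ω → ℝ) (Yhat S : Ω → Bool) : ℝ :=
  cPr p (fun ω => Yhat ω = true) (fun ω => S ω = true)
    - cPr p (fun ω => Yhat ω = true) (fun ω => S ω = false)

/-- Balanced error rate `BER(Ŷ,S) = ½P(Ŷ=1|S=0) + ½P(Ŷ=0|S=1)`. -/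
noncomputable def BER {Ω : Type*} [Fintype Ω] (p : Ω → ℝ) (Yhat S : Ω → Bool) : ℝ :=
  (1/2) * cPr p (fun ω => Yhat ω = true) (fun ω => S ω = false)
    + (1/2) * cPr p (fun ω => Yhat ω = false) (fun ω => S ω = true)

/-- `Ŷ` is conditionally independent of `S` given `Z`. -/
def CondIndepGiven {Ω 𝒳 : Type*} [Fintype Ω] (p : Ω → ℝ) (Yhat S : Ω → Bool)
    (Z : Ω → 𝒳) : Prop :=
  ∀ x : 𝒳, 0 < Pr p (fun ω => Z ω = x) →
    cPr p (fun ω => Yhat ω = true ∧ S ω = true) (fun ω => Z ω = x)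
      = cPr p (fun ω => Yhat ω = true) (fun ω => Z ω = x)
        * cPr p (fun ω => S ω = true) (fun ω => Z ω = x)

/-- Normalized disparate impact `DI(Ŷ,S) = 1 - P(Ŷ=1|S=0)/P(Ŷ=1|S=1)`. -/
noncomputable def DI {Ω : Type*} [Fintype Ω] (p : Ω → ℝ) (Yhat S : Ω → Bool) : ℝ :=
  1 - cPr p (fun ω => Yhat ω = true) (fun ω => S ω = false)
      / cPr p (fun ω => Yhat ω = true) (fun ω => S ω = true)


section Aux
open Classical
variable {Ω : Type*} [Fintype Ω] (p : Ω → ℝ)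

lemma Pr_nonneg' (hp : ∀ ω, 0 ≤ p ω) (E : Ω → Prop) : 0 ≤ Pr p E := by
  apply Finset.sum_nonneg; intro ω _
  split
  · exact hp ω
  · exact le_rfl

lemma Pr_congr' {A B : Ω → Prop} (h : ∀ ω, A ω ↔ B ω) : Pr p A = Pr p B := by
  have : A = B := funext fun ω => propext (h ω)
  rw [this]

lemma Pr_mono' (hp : ∀ ω, 0 ≤ p ω) {A B : Ω → Prop} (h : ∀ ω, A ω → B ω) :
    Pr p A ≤ Pr p B := by
  apply Finset.sum_le_sum; intro ω _
  by_cases hA : A ω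
  · simp [hA, h ω hA]
  · simp only [hA, if_false]
    split
    · exact hp ω
    · exact le_rfl

lemma Pr_split' (E : Ω → Prop) (S : Ω → Bool) :
    Pr p E = Pr p (fun ω => E ω ∧ S ω = true) + Pr p (fun ω => E ω ∧ S ω = false) := by
  unfold Pr
  rw [← Finset.sum_add_distrib]
  apply Finset.sum_congr rfl; intro ω _
  cases hS : S ω <;> by_cases hE : E ω <;> simp [hE, hS]

lemma Pr_fiber' {𝒳 : Type*} [Fintype 𝒳] (E : Ω → Prop) (Xf : Ω → 𝒳) :
    Pr p E = ∑ x : 𝒳, Pr p (fun ω => E ω ∧ Xf ω = x) := by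
  unfold Pr
  rw [Finset.sum_comm]
  apply Finset.sum_congr rfl; intro ω _
  by_cases hE : E ω
  · simp [hE]
  · simp [hE]

lemma Pr_eq_cPr_mul (A B : Ω → Prop) (hB : Pr p B ≠ 0) :
    Pr p (fun ω => A ω ∧ B ω) = cPr p A B * Pr p B := by
  unfold cPr
  field_simp

end Aux

/-- the decision variable `Ŷ_f^{DI}` with
`P(Ŷ_f^{DI}=1|X_f=x) = γ·1[P(S=1|X_f=x)=η_f]` attains
`DI(Ŷ_f^{DI},S) = 1 - P(S=1)(1-η_f) / (P(S=0)·η_f)`, so the bound is tight. -/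
theorem stmt6 {Ω 𝒳 : Type*} [Fintype Ω] [Fintype 𝒳] (p : Ω → ℝ) (hp : ∀ ω, 0 ≤ p ω)
    (hsum : ∑ ω, p ω = 1) (S YfDI : Ω → Bool) (Xf : Ω → 𝒳)
    (hS1 : 0 < Pr p (fun ω => S ω = true)) (hS1' : Pr p (fun ω => S ω = true) < 1)
    (ηf : ℝ)
    (hηub : ∀ x : 𝒳, 0 < Pr p (fun ω => Xf ω = x) →
      cPr p (fun ω => S ω = true) (fun ω => Xf ω = x) ≤ ηf)
    (hηatt : ∃ x : 𝒳, 0 < Pr p (fun ω => Xf ω = x) ∧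
      cPr p (fun ω => S ω = true) (fun ω => Xf ω = x) = ηf)
    (hη0 : 0 < ηf) (hηlt : ηf < 1)
    (γ : ℝ) (hγ0 : 0 < γ) (hγ1 : γ ≤ 1)
    (hci : CondIndepGiven p YfDI S Xf)
    (hdef : ∀ x : 𝒳, 0 < Pr p (fun ω => Xf ω = x) →
      cPr p (fun ω => YfDI ω = true) (fun ω => Xf ω = x)
        = if cPr p (fun ω => S ω = true) (fun ω => Xf ω = x) = ηf then γ else 0)
    (hpos : 0 < Pr p (fun ω => YfDI ω = true ∧ S ω = true)) :
    DI p YfDI S = 1 - (Pr p (fun ω => S ω = true) * (1 - ηf))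
      / (Pr p (fun ω => S ω = false) * ηf) := by
  classical
  set B1 := Pr p (fun ω => S ω = true) with hB1def
  set B0 := Pr p (fun ω => S ω = false) with hB0def
  have hB0 : B0 = 1 - B1 := by
    have h := Pr_split' p (fun _ => True) S
    have h1 : Pr p (fun _ : Ω => True) = 1 := by
      unfold Pr; simp [hsum]
    have h2 : Pr p (fun ω => True ∧ S ω = true) = B1 := by
      apply Pr_congr'; intro ω; tauto
    have h3 : Pr p (fun ω => True ∧ S ω = false) = B0 := by
      apply Pr_congr'; intro ω; tauto
    rw [h1, h2, h3] at h; linarith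
  have hB0pos : 0 < B0 := by rw [hB0]; linarith
  -- per-fiber computation
  have key : ∀ x : 𝒳,
      ηf * Pr p (fun ω => (YfDI ω = true ∧ S ω = false) ∧ Xf ω = x)
        = (1 - ηf) * Pr p (fun ω => (YfDI ω = true ∧ S ω = true) ∧ Xf ω = x) := by
    intro x
    by_cases ha : 0 < Pr p (fun ω => Xf ω = x)
    · have hane : Pr p (fun ω => Xf ω = x) ≠ 0 := ne_of_gt ha
      set a := Pr p (fun ω => Xf ω = x) with hadef
      set η := cPr p (fun ω => S ω = true) (fun ω => Xf ω = x) with hηdef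
      have hY : cPr p (fun ω => YfDI ω = true) (fun ω => Xf ω = x)
          = if η = ηf then γ else 0 := hdef x ha
      have hP1 : Pr p (fun ω => (YfDI ω = true ∧ S ω = true) ∧ Xf ω = x)
          = (if η = ηf then γ else 0) * η * a := by
        rw [Pr_eq_cPr_mul p _ _ hane, hci x ha, hY]
      have hPY : Pr p (fun ω => YfDI ω = true ∧ Xf ω = x)
          = (if η = ηf then γ else 0) * a := by
        rw [Pr_eq_cPr_mul p _ _ hane, hY]
      have hsplit : Pr p (fun ω => YfDI ω = true ∧ Xf ω = x)
          = Pr p (fun ω => (YfDI ω = true ∧ S ω = true) ∧ Xf ω = x)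
            + Pr p (fun ω => (YfDI ω = true ∧ S ω = false) ∧ Xf ω = x) := by
        rw [Pr_split' p (fun ω => YfDI ω = true ∧ Xf ω = x) S]
        congr 1
        · apply Pr_congr'; intro ω; tauto
        · apply Pr_congr'; intro ω; tauto
      have hP0 : Pr p (fun ω => (YfDI ω = true ∧ S ω = false) ∧ Xf ω = x)
          = (if η = ηf then γ else 0) * (1 - η) * a := by
        have := hsplit
        rw [hPY, hP1] at this
        linarith [this]
      rw [hP0, hP1]
      by_cases hx : η = ηf
      · simp [hx]; ring
      · simp [hx]
    · have hz : Pr p (fun ω => Xf ω = x) = 0 := by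
        have := Pr_nonneg' p hp (fun ω => Xf ω = x)
        linarith
      have h0 : ∀ A : Ω → Prop, Pr p (fun ω => A ω ∧ Xf ω = x) = 0 := by
        intro A
        have hle : Pr p (fun ω => A ω ∧ Xf ω = x) ≤ Pr p (fun ω => Xf ω = x) :=
          Pr_mono' p hp (fun ω h => h.2)
        have hge := Pr_nonneg' p hp (fun ω => A ω ∧ Xf ω = x)
        linarith
      rw [h0, h0]; ring
  -- sum over fibers
  have hkey : ηf * Pr p (fun ω => YfDI ω = true ∧ S ω = false)
      = (1 - ηf) * Pr p (fun ω => YfDI ω = true ∧ S ω = true) := by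
    rw [Pr_fiber' p (fun ω => YfDI ω = true ∧ S ω = false) Xf,
        Pr_fiber' p (fun ω => YfDI ω = true ∧ S ω = true) Xf,
        Finset.mul_sum, Finset.mul_sum]
    exact Finset.sum_congr rfl fun x _ => key x
  set A1 := Pr p (fun ω => YfDI ω = true ∧ S ω = true) with hA1def
  set A0 := Pr p (fun ω => YfDI ω = true ∧ S ω = false) with hA0def
  have hA1pos : 0 < A1 := hpos
  unfold DI cPr
  show 1 - (A0 / B0) / (A1 / B1) = 1 - B1 * (1 - ηf) / (B0 * ηf)
  have h1 : (A0 / B0) / (A1 / B1) = B1 * (1 - ηf) / (B0 * ηf) := by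
    field_simp
    linear_combination hkey
  rw [h1]
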